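/- For all $i_1,i_2\in\{1,\dots,i(n)\}$ with $i_1<i_2$, writing $e_{i_1}=(j_1,k_1)$ and $e_{i_2}=(j_2,k_2)$, one has $\|y_{j_1}\|-2\le M(i_1,i_2)\le\|y_{j_1}\|$, where $M(i_1,i_2)=m(j_2,j_1)$ if $k_2\le k_1$ and $M(i_1,i_2)=m(j_2,j_1-1)$ if $k_2>k_1$. -/

import Mathlib

open Set

noncomputable section

variable {Γ : Type*} [TopologicalSpace Γ] [DiscreteTopology Γ]

/-- `ℓ∞(Γ)`: the Banach space of bounded real functions on `Γ`
(carrying the discrete topology, so that boundedness is the only constraint). -/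
abbrev Linf (Γ : Type*) [TopologicalSpace Γ] [DiscreteTopology Γ] : Type _ :=
  BoundedContinuousFunction Γ ℝ

/-- The entire part of a real number, toward `0`: `[r] = sign(r)⌊|r|⌋`. -/
def ent (r : ℝ) : ℝ := Real.sign r * ⌊|r|⌋

lemma abs_ent_le (r : ℝ) : |ent r| ≤ |r| := by
  have hsign : |Real.sign r| ≤ 1 := by
    rcases lt_trichotomy r 0 with h | h | h
    · rw [Real.sign_of_neg h]; norm_num
    · rw [h, Real.sign_zero]; norm_num
    · rw [Real.sign_of_pos h]; norm_num
  have hfl : |(⌊|r|⌋ : ℝ)| ≤ |r| := by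
    rw [abs_of_nonneg (by exact_mod_cast Int.floor_nonneg.mpr (abs_nonneg r))]
    exact Int.floor_le _
  calc |ent r| = |Real.sign r| * |(⌊|r|⌋ : ℝ)| := abs_mul _ _
    _ ≤ 1 * |r| := mul_le_mul hsign hfl (abs_nonneg _) zero_le_one
    _ = |r| := one_mul _

/-- The coordinatewise quantization `f : ℓ∞(S) → ℓ∞(S)`, `f(x)(γ) = [x(γ)]`. -/
def quant (x : Linf Γ) : Linf Γ :=
  BoundedContinuousFunction.ofNormedAddCommGroup (fun γ => ent (x γ))
    continuous_of_discreteTopology ‖x‖ (fun γ => by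
      rw [Real.norm_eq_abs]
      exact (abs_ent_le (x γ)).trans (by simpa using x.norm_coe_le_norm γ))

/-- Scalar truncation at level `s`. -/
def truncFun (s t : ℝ) : ℝ := if |t| ≤ s then t else s * t / |t|

lemma abs_truncFun_le (s t : ℝ) : |truncFun s t| ≤ max |s| |t| := by
  unfold truncFun
  split_ifs with h
  · exact le_max_right _ _
  · by_cases ht : t = 0
    · simp [ht]
    · have hst : abs (s * t / |t|) = |s| := by
        rw [abs_div, abs_mul, abs_abs, mul_div_assoc, div_self (abs_ne_zero.mpr ht), mul_one]
      rw [hst]; exact le_max_left _ _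

/-- The truncation of radius `s`: `T_s(x)(γ) = x(γ)` if `|x(γ)| ≤ s`,
and `= s·x(γ)/|x(γ)|` otherwise. -/
def trunc (s : ℝ) (x : Linf Γ) : Linf Γ :=
  BoundedContinuousFunction.ofNormedAddCommGroup (fun γ => truncFun s (x γ))
    continuous_of_discreteTopology (max |s| ‖x‖) (fun γ => by
      rw [Real.norm_eq_abs]
      exact (abs_truncFun_le s (x γ)).trans
        (max_le_max le_rfl (by simpa using x.norm_coe_le_norm γ)))

/-- The restriction operator `r_S : ℓ∞(Γ) → ℓ∞(S)`, where `ℓ∞(S)` is identified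
isometrically with the subspace of `ℓ∞(Γ)` of functions vanishing off `S`. -/
def restr (S : Set Γ) (x : Linf Γ) : Linf Γ :=
  BoundedContinuousFunction.ofNormedAddCommGroup (S.indicator x)
    continuous_of_discreteTopology ‖x‖ (fun γ => by
      rw [Real.norm_eq_abs]
      by_cases h : γ ∈ S
      · rw [Set.indicator_of_mem h]
        simpa using x.norm_coe_le_norm γ
      · rw [Set.indicator_of_notMem h]
        simp)

/-- The ball `s·B_{ℓ∞(S)}`, viewed inside `ℓ∞(Γ)`: functions supported on `S`
of norm at most `s`. -/
def suppBall (S : Set Γ) (s : ℝ) : Set (Linf Γ) :=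
  {x | (∀ γ ∉ S, x γ = 0) ∧ ‖x‖ ≤ s}

/-- `chain T a b = T (a+1) ∘ ⋯ ∘ T b` (the identity if `b ≤ a`). -/
def chain {α : Type*} (T : ℕ → α → α) (a b : ℕ) : α → α :=
  Nat.rec id (fun k ih => ih ∘ T (a + k + 1)) (b - a)

/-- Bourgain–Delbaen data on `Γ`: a strictly increasing sequence of nonempty finite
sets `Γs n` (for `n ≥ 1`) with union `Γ`, together with compatible bounded linear
extension operators `i n : ℓ∞(Γ_n) → ℓ∞(Γ)` (realized as operators on `ℓ∞(Γ)`
factoring through the restriction `restr (Γs n)`), with norms bounded by the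
positive integer `lam`. -/
structure BD (Γ : Type*) [TopologicalSpace Γ] [DiscreteTopology Γ] where
  Γs : ℕ → Set Γ
  lam : ℕ
  i : ℕ → Linf Γ →L[ℝ] Linf Γ
  one_le_lam : 1 ≤ lam
  finite : ∀ n, 1 ≤ n → (Γs n).Finite
  nonempty : ∀ n, 1 ≤ n → (Γs n).Nonempty
  ssubset : ∀ n, 1 ≤ n → Γs n ⊂ Γs (n + 1)
  iUnion_eq : ⋃ n ∈ {k : ℕ | 1 ≤ k}, Γs n = Set.univ
  extension : ∀ n, 1 ≤ n → ∀ x : Linf Γ, ∀ γ ∈ Γs n, i n x γ = x γ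
  factor : ∀ n, 1 ≤ n → ∀ x : Linf Γ, i n (restr (Γs n) x) = i n x
  compatible : ∀ n m, 1 ≤ n → n < m → ∀ x : Linf Γ, i m (restr (Γs m) (i n x)) = i n x
  norm_i_le : ∀ n, 1 ≤ n → ‖i n‖ ≤ (lam : ℝ)

namespace BD

/-- `s n = λ^n`. -/
def s (B : BD Γ) (n : ℕ) : ℝ := (B.lam : ℝ) ^ n

/-- The sets `M_n` (with `M_0 = ∅`):
`M_n = M_{n-1} ∪ (f ∘ i_n)(f(s_n B_{ℓ∞(Γ_n)}) \ r_n(M_{n-1}))`. -/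
def M (B : BD Γ) : ℕ → Set (Linf Γ)
  | 0 => ∅
  | n + 1 =>
      M B n ∪
        (fun z => quant (B.i (n + 1) z)) ''
          (quant '' suppBall (B.Γs (n + 1)) (B.s (n + 1)) \ restr (B.Γs (n + 1)) '' M B n)

/-- `M = ⋃ n, M_n`. -/
def Mtot (B : BD Γ) : Set (Linf Γ) := ⋃ n, B.M n

/-- `C_n = (f ∘ i_{n+1} ∘ f ∘ T_{s_{n+1}} ∘ r_{n+1} ∘ i_n)
(f(s_{n+1}B_{ℓ∞(Γ_n)}) \ f(s_n B_{ℓ∞(Γ_n)}))`. -/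
def C (B : BD Γ) (n : ℕ) : Set (Linf Γ) :=
  (fun z => quant (B.i (n + 1) (quant (trunc (B.s (n + 1)) (restr (B.Γs (n + 1)) (B.i n z)))))) ''
    (quant '' suppBall (B.Γs n) (B.s (n + 1)) \ quant '' suppBall (B.Γs n) (B.s n))

/-- `D_n = M_n ∪ C_n`. -/
def D (B : BD Γ) (n : ℕ) : Set (Linf Γ) := B.M n ∪ B.C n

end BD

section AuxM

variable {Δ : Type*} [TopologicalSpace Δ] [DiscreteTopology Δ]

/-- integer-valued bounded functions -/
def IntVal (x : Linf Δ) : Prop := ∀ γ, ∃ k : ℤ, x γ = (k : ℝ)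

lemma quant_apply (x : Linf Δ) (γ : Δ) : quant x γ = ent (x γ) := rfl

lemma trunc_apply (s : ℝ) (x : Linf Δ) (γ : Δ) : trunc s x γ = truncFun s (x γ) := rfl

lemma ent_intCast (k : ℤ) : ent ((k : ℤ) : ℝ) = (k : ℝ) := by
  unfold ent
  have h1 : |((k : ℤ) : ℝ)| = ((|k| : ℤ) : ℝ) := by push_cast; rfl
  rw [h1, Int.floor_intCast]
  rcases lt_trichotomy k 0 with h | h | h
  · have : ((k : ℤ) : ℝ) < 0 := by exact_mod_cast h
    rw [Real.sign_of_neg this]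
    rw [abs_of_neg h]; push_cast; ring
  · simp [h]
  · have : (0 : ℝ) < ((k : ℤ) : ℝ) := by exact_mod_cast h
    rw [Real.sign_of_pos this, abs_of_pos h, one_mul]

lemma quant_eq_self {x : Linf Δ} (hx : IntVal x) : quant x = x := by
  ext γ
  obtain ⟨k, hk⟩ := hx γ
  rw [quant_apply, hk, ent_intCast]

lemma intVal_quant (x : Linf Δ) : IntVal (quant x) := by
  intro γ
  rw [quant_apply]
  unfold ent
  rcases lt_trichotomy (x γ) 0 with h | h | h
  · exact ⟨-⌊|x γ|⌋, by rw [Real.sign_of_neg h]; push_cast; ring⟩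
  · exact ⟨0, by simp [h]⟩
  · exact ⟨⌊|x γ|⌋, by rw [Real.sign_of_pos h, one_mul]⟩

lemma intVal_trunc {x : Linf Δ} (hx : IntVal x) (n : ℕ) : IntVal (trunc (n : ℝ) x) := by
  intro γ
  obtain ⟨k, hk⟩ := hx γ
  rw [trunc_apply, hk]
  unfold truncFun
  split_ifs with h
  · exact ⟨k, rfl⟩
  · push_neg at h
    rcases lt_trichotomy k 0 with hk0 | hk0 | hk0
    · refine ⟨-n, ?_⟩
      have hkR : ((k : ℤ) : ℝ) < 0 := by exact_mod_cast hk0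
      have hkne : ((k : ℤ) : ℝ) ≠ 0 := ne_of_lt hkR
      rw [abs_of_neg hkR]
      push_cast
      rw [div_neg, mul_div_assoc, div_self hkne, mul_one]
    · exfalso; subst hk0; norm_num at h; exact absurd h (not_lt.mpr (Nat.cast_nonneg n))
    · refine ⟨n, ?_⟩
      have hkR : (0 : ℝ) < ((k : ℤ) : ℝ) := by exact_mod_cast hk0
      have hkne : ((k : ℤ) : ℝ) ≠ 0 := ne_of_gt hkR
      rw [abs_of_pos hkR]
      push_cast
      rw [mul_div_assoc, div_self hkne, mul_one]

variable [Finite Δ] [Nonempty Δ]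

lemma linf_exists_norm_eq (x : Linf Δ) : ∃ γ, ‖x‖ = |x γ| := by
  obtain ⟨γ₀, hγ₀⟩ := Finite.exists_max (fun γ => |x γ|)
  refine ⟨γ₀, le_antisymm ?_ ?_⟩
  · refine (BoundedContinuousFunction.norm_le (abs_nonneg _)).mpr (fun γ => ?_)
    rw [Real.norm_eq_abs]; exact hγ₀ γ
  · have := x.norm_coe_le_norm γ₀
    rwa [Real.norm_eq_abs] at this

lemma norm_nat {x : Linf Δ} (hx : IntVal x) : ∃ N : ℕ, ‖x‖ = (N : ℝ) := by
  obtain ⟨γ, hγ⟩ := linf_exists_norm_eq x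
  obtain ⟨k, hk⟩ := hx γ
  refine ⟨k.natAbs, ?_⟩
  rw [hγ, hk]
  rw [Nat.cast_natAbs, Int.cast_abs]

lemma abs_truncFun {m : ℝ} (hm : 0 ≤ m) (t : ℝ) : |truncFun m t| = min m |t| := by
  unfold truncFun
  split_ifs with h
  · rw [min_eq_right h]
  · push_neg at h
    have ht : t ≠ 0 := by intro h0; rw [h0, abs_zero] at h; linarith
    have : abs (m * t / |t|) = m := by
      rw [abs_div, abs_mul, abs_abs, abs_of_nonneg hm, mul_div_assoc,
        div_self (abs_ne_zero.mpr ht), mul_one]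
    rw [this, min_eq_left h.le]

lemma norm_trunc {m : ℝ} (hm : 0 ≤ m) (x : Linf Δ) : ‖trunc m x‖ = min m ‖x‖ := by
  refine le_antisymm ?_ ?_
  · refine (BoundedContinuousFunction.norm_le (le_min hm (norm_nonneg x))).mpr (fun γ => ?_)
    rw [Real.norm_eq_abs, trunc_apply, abs_truncFun hm]
    refine min_le_min le_rfl ?_
    have := x.norm_coe_le_norm γ
    rwa [Real.norm_eq_abs] at this
  · obtain ⟨γ, hγ⟩ := linf_exists_norm_eq x
    have h1 := (trunc m x).norm_coe_le_norm γ
    rw [Real.norm_eq_abs, trunc_apply, abs_truncFun hm, ← hγ] at h1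
    exact h1

end AuxM

section ChainAux

variable {α : Type*}

lemma chain_id (T : ℕ → α → α) {a b : ℕ} (h : b ≤ a) : chain T a b = id := by
  unfold chain
  rw [Nat.sub_eq_zero_of_le h]
  rfl

lemma chain_succ (T : ℕ → α → α) {a b : ℕ} (h : a < b) :
    chain T a b = chain T a (b - 1) ∘ T b := by
  obtain ⟨n, rfl⟩ : ∃ n, b = a + n + 1 := ⟨b - a - 1, by omega⟩
  have h1 : a + n + 1 - 1 = a + n := by omega
  rw [h1]
  show chain T a (a + n + 1) = chain T a (a + n) ∘ T (a + n + 1)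
  unfold chain
  rw [show a + n + 1 - a = n + 1 from by omega, show a + n - a = n from by omega]

end ChainAux

section KeyM

variable {Δ : Type*} [TopologicalSpace Δ] [DiscreteTopology Δ] [Finite Δ] [Nonempty Δ]

lemma chain_fix (y : ℕ → Linf Δ) (T : ℕ → Linf Δ → Linf Δ)
    (hT_id : ∀ j k, k < j → T j (y k) = y k)
    {a c : ℕ} (hc : c ≤ a) : ∀ b, chain T a b (y c) = y c := by
  intro b
  induction b with
  | zero => rw [chain_id T (Nat.zero_le a)]; rfl
  | succ b ih =>
      by_cases hb : b + 1 ≤ a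
      · rw [chain_id T hb]; rfl
      · push_neg at hb
        rw [chain_succ T hb, Nat.add_sub_cancel]
        simp only [Function.comp_apply]
        rw [hT_id (b + 1) c (by omega), ih]

lemma chain_stable (y : ℕ → Linf Δ) (T : ℕ → Linf Δ → Linf Δ)
    (hT_id : ∀ j k, k < j → T j (y k) = y k)
    {a c : ℕ} (hac : a ≤ c) : ∀ b, c ≤ b → chain T a b (y c) = chain T a c (y c) := by
  intro b
  induction b with
  | zero => intro hb; have : c = 0 := by omega
            subst this; rfl
  | succ b ih =>
      intro hb
      rcases Nat.lt_or_ge c (b + 1) with h | h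
      · rw [chain_succ T (by omega : a < b + 1), Nat.add_sub_cancel]
        simp only [Function.comp_apply]
        rw [hT_id (b + 1) c (by omega), ih (by omega)]
      · have : c = b + 1 := by omega
        subst this; rfl

lemma key_chain (y : ℕ → Linf Δ) (hy0 : y 0 = 0) (hyinj : Function.Injective y)
    (hyrange : Set.range y = Set.range (fun z : Linf Δ => quant z))
    (hymono : ∀ j₁ j₂, j₁ ≤ j₂ → ‖y j₁‖ ≤ ‖y j₂‖)
    (T : ℕ → Linf Δ → Linf Δ)
    (hT_val : ∀ j, 1 ≤ j → T j (y j) = trunc (‖y j‖ - 1) (y j))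
    (hT_id : ∀ j k, k < j → T j (y k) = y k) :
    ∀ j j', j' < j → ∃ c, c ≤ j' ∧ chain T j' j (y j) = y c ∧
      ‖y (j' + 1)‖ - 1 ≤ ‖y c‖ ∧ ‖y c‖ ≤ ‖y j‖ - 1 := by
  have hint : ∀ j, IntVal (y j) := by
    intro j
    have : y j ∈ Set.range (fun z : Linf Δ => quant z) := by
      rw [← hyrange]; exact ⟨j, rfl⟩
    obtain ⟨z, hz⟩ := this
    rw [← hz]; exact intVal_quant z
  have hmem : ∀ x : Linf Δ, IntVal x → ∃ c, x = y c := by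
    intro x hx
    have : x ∈ Set.range y := by
      rw [hyrange]; exact ⟨x, quant_eq_self hx⟩
    obtain ⟨c, hc⟩ := this
    exact ⟨c, hc.symm⟩
  intro j
  induction j using Nat.strong_induction_on with
  | _ j ih =>
    intro j' hj'
    have hj1 : 1 ≤ j := by omega
    obtain ⟨N, hN⟩ := norm_nat (hint j)
    have hyne : y j ≠ 0 := by
      intro h0
      have : y j = y 0 := by rw [h0, hy0]
      exact absurd (hyinj this) (by omega)
    have hN1 : 1 ≤ N := by
      by_contra h
      have : N = 0 := by omega
      rw [this] at hN
      exact hyne (norm_eq_zero.mp (by rw [hN]; norm_num))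
    have hcast : ‖y j‖ - 1 = ((N - 1 : ℕ) : ℝ) := by
      rw [hN, Nat.cast_sub hN1, Nat.cast_one]
    -- the truncated element
    have hTval : T j (y j) = trunc ((N - 1 : ℕ) : ℝ) (y j) := by
      rw [hT_val j hj1, hcast]
    obtain ⟨c₀, hc₀⟩ := hmem _ (intVal_trunc (hint j) (N - 1))
    have hnc₀ : ‖y c₀‖ = ((N - 1 : ℕ) : ℝ) := by
      rw [← hc₀, norm_trunc (Nat.cast_nonneg _), hN]
      rw [min_eq_left (by exact_mod_cast Nat.sub_le N 1)]
    have hc₀j : c₀ < j := by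
      by_contra h
      push_neg at h
      have := hymono j c₀ h
      rw [hN, hnc₀] at this
      have : (N : ℝ) ≤ (N : ℝ) - 1 := by
        rw [Nat.cast_sub hN1, Nat.cast_one] at this; exact this
      linarith
    have hstep : chain T j' j (y j) = chain T j' (j - 1) (y c₀) := by
      rw [chain_succ T hj', Function.comp_apply, hTval, hc₀]
    rcases le_or_gt c₀ j' with hle | hlt
    · -- c₀ ≤ j' : the chain fixes y c₀
      refine ⟨c₀, hle, ?_, ?_, ?_⟩
      · rw [hstep, chain_fix y T hT_id hle]
      · rw [hnc₀, ← hcast]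
        have := hymono (j' + 1) j (by omega)
        linarith
      · rw [hnc₀, ← hcast]
    · -- j' < c₀ < j : recurse
      have h1 : chain T j' (j - 1) (y c₀) = chain T j' c₀ (y c₀) :=
        chain_stable y T hT_id hlt.le (j - 1) (by omega)
      obtain ⟨c, hc, heq, hlow, hhigh⟩ := ih c₀ hc₀j j' hlt
      refine ⟨c, hc, ?_, hlow, ?_⟩
      · rw [hstep, h1, heq]
      · rw [hnc₀, ← hcast] at hhigh
        linarith

lemma mfun_eval (y : ℕ → Linf Δ) (hy0 : y 0 = 0) (hyinj : Function.Injective y)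
    (hyrange : Set.range y = Set.range (fun z : Linf Δ => quant z))
    (hymono : ∀ j₁ j₂, j₁ ≤ j₂ → ‖y j₁‖ ≤ ‖y j₂‖)
    (T : ℕ → Linf Δ → Linf Δ)
    (hT_val : ∀ j, 1 ≤ j → T j (y j) = trunc (‖y j‖ - 1) (y j))
    (hT_id : ∀ j k, k < j → T j (y k) = y k)
    (mfun : ℕ → ℕ → ℕ)
    (hm : ∀ j' j, j' < j → chain T j' j (y j) = trunc ((mfun j j' : ℕ) : ℝ) (y j))
    {j j' : ℕ} (hj : j' < j) :
    ‖y (j' + 1)‖ - 1 ≤ ((mfun j j' : ℕ) : ℝ) ∧ ((mfun j j' : ℕ) : ℝ) ≤ ‖y j'‖ := by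
  obtain ⟨c, hc, heq, hlow, hhigh⟩ :=
    key_chain y hy0 hyinj hyrange hymono T hT_val hT_id j j' hj
  have htr : trunc ((mfun j j' : ℕ) : ℝ) (y j) = y c := by
    rw [← hm j' j hj, heq]
  have hnorm : min ((mfun j j' : ℕ) : ℝ) ‖y j‖ = ‖y c‖ := by
    rw [← norm_trunc (Nat.cast_nonneg _) (y j), htr]
  have hlt : ‖y c‖ < ‖y j‖ := by linarith
  have hmeq : ((mfun j j' : ℕ) : ℝ) = ‖y c‖ := by
    rcases min_cases ((mfun j j' : ℕ) : ℝ) ‖y j‖ with ⟨h1, _⟩ | ⟨h1, h2⟩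
    · rw [← hnorm, h1]
    · rw [h1] at hnorm; linarith
  constructor
  · rw [hmeq]; exact hlow
  · rw [hmeq]; exact hymono c j' hc

end KeyM

/-- Lemma 11 (`remlip`): for `i₁ < i₂` in the lexicographic enumeration `e` of
`E(n)`, writing `e i₁ = (j₁,k₁)` and `e i₂ = (j₂,k₂)`, the quantity
`M(i₁,i₂)` (equal to `m(j₂,j₁)` if `k₂ ≤ k₁`, and to `m(j₂,j₁-1)` if `k₂ > k₁`)
satisfies `‖y_{j₁}‖ - 2 ≤ M(i₁,i₂) ≤ ‖y_{j₁}‖`. -/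
theorem M_bound
    {Δ : Type*} [TopologicalSpace Δ] [DiscreteTopology Δ] [Finite Δ] [Nonempty Δ]
    (y : ℕ → Linf Δ) (hy0 : y 0 = 0) (hyinj : Function.Injective y)
    (hyrange : Set.range y = Set.range (fun z : Linf Δ => quant z))
    (hymono : ∀ j₁ j₂, j₁ ≤ j₂ → ‖y j₁‖ ≤ ‖y j₂‖)
    (T : ℕ → Linf Δ → Linf Δ)
    (hT_val : ∀ j, 1 ≤ j → T j (y j) = trunc (‖y j‖ - 1) (y j))
    (hT_id : ∀ j k, k < j → T j (y k) = y k)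
    (mfun : ℕ → ℕ → ℕ)
    (hm : ∀ j' j, j' < j → chain T j' j (y j) = trunc ((mfun j j' : ℕ) : ℝ) (y j))
    (I : ℕ) (e : ℕ → ℕ × ℕ)
    (he_pos : ∀ i, 1 ≤ i → i ≤ I → 1 ≤ (e i).1 ∧ 1 ≤ (e i).2)
    (he_lex : ∀ i₁ i₂, 1 ≤ i₁ → i₁ < i₂ → i₂ ≤ I →
      (e i₁).1 < (e i₂).1 ∨ ((e i₁).1 = (e i₂).1 ∧ (e i₁).2 < (e i₂).2))
    (i₁ i₂ : ℕ) (hi₁ : 1 ≤ i₁) (h12 : i₁ < i₂) (hi₂ : i₂ ≤ I) :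
    ‖y (e i₁).1‖ - 2 ≤
      (((if (e i₂).2 ≤ (e i₁).2 then mfun (e i₂).1 (e i₁).1
          else mfun (e i₂).1 ((e i₁).1 - 1)) : ℕ) : ℝ) ∧
    (((if (e i₂).2 ≤ (e i₁).2 then mfun (e i₂).1 (e i₁).1
        else mfun (e i₂).1 ((e i₁).1 - 1)) : ℕ) : ℝ) ≤ ‖y (e i₁).1‖ := by
  have hpos1 := he_pos i₁ hi₁ (by omega)
  have hpos2 := he_pos i₂ (by omega) hi₂
  have hlex := he_lex i₁ i₂ hi₁ h12 hi₂
  by_cases hk : (e i₂).2 ≤ (e i₁).2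
  · simp only [if_pos hk]
    have hjlt : (e i₁).1 < (e i₂).1 := by
      rcases hlex with h | ⟨_, h⟩
      · exact h
      · omega
    obtain ⟨h1, h2⟩ :=
      mfun_eval y hy0 hyinj hyrange hymono T hT_val hT_id mfun hm hjlt
    have hmono' := hymono (e i₁).1 ((e i₁).1 + 1) (by omega)
    exact ⟨by linarith, h2⟩
  · simp only [if_neg hk]
    have hjle : (e i₁).1 ≤ (e i₂).1 := by
      rcases hlex with h | ⟨h, _⟩ <;> omega
    have hjlt : (e i₁).1 - 1 < (e i₂).1 := by omega
    obtain ⟨h1, h2⟩ :=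
      mfun_eval y hy0 hyinj hyrange hymono T hT_val hT_id mfun hm hjlt
    rw [show (e i₁).1 - 1 + 1 = (e i₁).1 from by omega] at h1
    have hmono' := hymono ((e i₁).1 - 1) (e i₁).1 (by omega)
    exact ⟨by linarith, by linarith⟩
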